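/- Let ν > 0. For all real symmetric n×n matrices X and Z: X = Π(X − Z) if and only if X = Π(X − ν·Z). -/

import Mathlib

open Matrix

/-- Real scalar multiples of real symmetric matrices are symmetric. -/
theorem isHermitian_smul_real {n : ℕ} {Z : Matrix (Fin n) (Fin n) ℝ}
    (hZ : Z.IsHermitian) (ν : ℝ) : (ν • Z).IsHermitian := by
  have h : (ν • Z)ᴴ = ν • Zᴴ := by
    ext i j; simp [Matrix.conjTranspose_apply]
  rw [Matrix.IsHermitian, h, hZ]

/-- The projection onto the PSD cone, `Π(W) = (t ↦ max(t,0))[W]`, via the primary matrix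
function (Mathlib's `Matrix.IsHermitian.cfc`). -/
noncomputable def PiPSD {n : ℕ} {W : Matrix (Fin n) (Fin n) ℝ}
    (hW : W.IsHermitian) : Matrix (Fin n) (Fin n) ℝ :=
  hW.cfc (fun t => max t 0)

section Aux

variable {n : ℕ}

private lemma trace_nonneg_of_psd {A : Matrix (Fin n) (Fin n) ℝ} (hA : A.PosSemidef) :
    0 ≤ A.trace := by
  rw [Matrix.trace]
  refine Finset.sum_nonneg fun i _ => ?_
  have := hA.dotProduct_mulVec_nonneg (Pi.single i 1)
  simpa [Matrix.mulVec_single, dotProduct, Pi.single_apply] using this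

open scoped MatrixOrder in
private lemma trace_mul_nonneg_of_psd {A B : Matrix (Fin n) (Fin n) ℝ}
    (hA : A.PosSemidef) (hB : B.PosSemidef) : 0 ≤ (A * B).trace := by
  have hS : CFC.sqrt A * CFC.sqrt A = A := CFC.sqrt_mul_sqrt_self A hA.nonneg
  have hSh : (CFC.sqrt A).IsHermitian := (CFC.sqrt_nonneg A).posSemidef.1
  have hpsd : (CFC.sqrt A * B * (CFC.sqrt A)ᴴ).PosSemidef :=
    hB.mul_mul_conjTranspose_same (CFC.sqrt A)
  replace hSh := hSh.eq
  rw [hSh] at hpsd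
  have ht : (A * B).trace = (CFC.sqrt A * B * CFC.sqrt A).trace := by
    have h1 : (A * B).trace = ((CFC.sqrt A * CFC.sqrt A) * B).trace := by rw [hS]
    rw [h1, mul_assoc, Matrix.trace_mul_comm]
  rw [ht]
  exact trace_nonneg_of_psd hpsd

private lemma psd_cfc {W : Matrix (Fin n) (Fin n) ℝ} (hW : W.IsHermitian)
    {f : ℝ → ℝ} (hf : ∀ t, 0 ≤ f t) : (cfc f W).PosSemidef := by
  rw [hW.cfc_eq]
  unfold Matrix.IsHermitian.cfc
  have hd : (Matrix.diagonal (RCLike.ofReal ∘ f ∘ hW.eigenvalues) :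
      Matrix (Fin n) (Fin n) ℝ).PosSemidef :=
    Matrix.posSemidef_diagonal_iff.mpr fun i => by
      simpa using hf (hW.eigenvalues i)
  simpa [Matrix.star_eq_conjTranspose] using
    hd.mul_mul_conjTranspose_same (hW.eigenvectorUnitary : Matrix (Fin n) (Fin n) ℝ)

private lemma pos_sub_neg : ∀ t : ℝ, max t 0 - max (-t) 0 = t := by
  intro t
  rcases le_total 0 t with h | h
  · rw [max_eq_left h, max_eq_right (by linarith)]; ring
  · rw [max_eq_right h, max_eq_left (by linarith)]; ring

private lemma pos_mul_neg : ∀ t : ℝ, max t 0 * max (-t) 0 = 0 := by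
  intro t
  rcases le_total 0 t with h | h
  · rw [max_eq_right (a := -t) (by linarith), mul_zero]
  · rw [max_eq_right (a := t) h, zero_mul]

/-- Moreau-type characterization of the projection onto the PSD cone. -/
private lemma eq_piPSD_iff {W X : Matrix (Fin n) (Fin n) ℝ}
    (hW : W.IsHermitian) (hX : X.IsHermitian) :
    X = PiPSD hW ↔ X.PosSemidef ∧ (X - W).PosSemidef ∧ X * (X - W) = 0 := by
  have hWsa : IsSelfAdjoint W := hW
  have hPi : PiPSD hW = cfc (fun t : ℝ => max t 0) W := (hW.cfc_eq _).symm
  set Wp := cfc (fun t : ℝ => max t 0) W with hWp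
  set Wn := cfc (fun t : ℝ => max (-t) 0) W with hWn
  have hWpP : Wp.PosSemidef := psd_cfc hW fun t => le_max_right _ _
  have hWnP : Wn.PosSemidef := psd_cfc hW fun t => le_max_right _ _
  have hsub : Wp - Wn = W := by
    rw [hWp, hWn, ← cfc_sub (fun t : ℝ => max t 0) (fun t : ℝ => max (-t) 0) W]
    have : (fun t : ℝ => max t 0 - max (-t) 0) = (id : ℝ → ℝ) := funext fun t => pos_sub_neg t
    rw [this, cfc_id ℝ W]
  have hmul : Wp * Wn = 0 := by
    rw [hWp, hWn, ← cfc_mul (fun t : ℝ => max t 0) (fun t : ℝ => max (-t) 0) W]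
    have : (fun t : ℝ => max t 0 * max (-t) 0) = (0 : ℝ → ℝ) := funext fun t => pos_mul_neg t
    rw [this, cfc_zero ℝ W]
  have h' : Wp = W + Wn := by
    rw [← hsub]; abel
  have hdiff : Wp - W = Wn := by rw [h']; abel
  constructor
  · rintro rfl
    rw [hPi]
    exact ⟨hWpP, hdiff ▸ hWnP, hdiff ▸ hmul⟩
  · rintro ⟨hXP, hYP, hXY⟩
    rw [hPi]
    have hA2 : X - Wp = (X - W) - Wn := by rw [h']; abel
    have hAh : (X - Wp).IsHermitian := hX.sub hWpP.1
    have hsymm : ∀ i j, (X - Wp) j i = (X - Wp) i j := fun i j => by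
      conv_lhs => rw [← hAh.eq]
      simp [Matrix.conjTranspose_apply]
    have hexp : (X - Wp) * (X - Wp)
        = X * (X - W) - X * Wn - Wp * (X - W) + Wp * Wn := by
      nth_rewrite 2 [hA2]
      noncomm_ring
    have htr : ((X - Wp) * (X - Wp)).trace
        = -(X * Wn).trace - (Wp * (X - W)).trace := by
      rw [hexp, hXY, hmul]
      simp [Matrix.trace_sub, Matrix.trace_add]
    have hle : ((X - Wp) * (X - Wp)).trace ≤ 0 := by
      rw [htr]
      have h1 : 0 ≤ (X * Wn).trace := trace_mul_nonneg_of_psd hXP hWnP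
      have h2 : 0 ≤ (Wp * (X - W)).trace := trace_mul_nonneg_of_psd hWpP hYP
      linarith
    have hsq : ((X - Wp) * (X - Wp)).trace = ∑ i, ∑ j, (X - Wp) i j * (X - Wp) i j := by
      rw [Matrix.trace]
      simp only [Matrix.diag_apply, Matrix.mul_apply]
      refine Finset.sum_congr rfl fun i _ => Finset.sum_congr rfl fun j _ => ?_
      rw [hsymm i j]
    have hzero : ∑ i, ∑ j, (X - Wp) i j * (X - Wp) i j = 0 := by
      have hge : 0 ≤ ∑ i, ∑ j, (X - Wp) i j * (X - Wp) i j :=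
        Finset.sum_nonneg fun i _ => Finset.sum_nonneg fun j _ => mul_self_nonneg _
      rw [hsq] at hle
      linarith
    have hAzero : X - Wp = 0 := by
      ext i j
      have h1 := (Finset.sum_eq_zero_iff_of_nonneg
        (fun i _ => Finset.sum_nonneg fun j _ => mul_self_nonneg ((X - Wp) i j))).mp hzero i
        (Finset.mem_univ i)
      have h2 := (Finset.sum_eq_zero_iff_of_nonneg
        (fun j _ => mul_self_nonneg ((X - Wp) i j))).mp h1 j (Finset.mem_univ j)
      simpa using mul_self_eq_zero.mp h2
    rw [sub_eq_zero] at hAzero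
    exact hAzero

private lemma psd_smul {Z : Matrix (Fin n) (Fin n) ℝ} (hZ : Z.PosSemidef)
    {c : ℝ} (hc : 0 ≤ c) : (c • Z).PosSemidef := by
  refine .of_dotProduct_mulVec_nonneg (isHermitian_smul_real hZ.1 c) fun x => ?_
  have := hZ.dotProduct_mulVec_nonneg x
  calc (0 : ℝ) ≤ c * dotProduct (star x) (Z *ᵥ x) := mul_nonneg hc this
    _ = dotProduct (star x) ((c • Z) *ᵥ x) := by
        rw [Matrix.smul_mulVec, dotProduct_smul, smul_eq_mul]

end Aux

/-- For `ν > 0` and symmetric `X`, `Z`: `X = Π(X − Z)` iff `X = Π(X − ν·Z)`. -/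
theorem proj_scaling_invariance {n : ℕ} (hn : 0 < n) (ν : ℝ) (hν : 0 < ν)
    (X Z : Matrix (Fin n) (Fin n) ℝ) (hX : X.IsHermitian) (hZ : Z.IsHermitian) :
    X = PiPSD (hX.sub hZ) ↔ X = PiPSD (hX.sub (isHermitian_smul_real hZ ν)) := by
  have e1 : X - (X - Z) = Z := by abel
  have e2 : X - (X - ν • Z) = ν • Z := by abel
  rw [eq_piPSD_iff (hX.sub hZ) hX, eq_piPSD_iff (hX.sub (isHermitian_smul_real hZ ν)) hX,
    e1, e2]
  constructor
  · rintro ⟨h1, h2, h3⟩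
    refine ⟨h1, psd_smul h2 hν.le, ?_⟩
    rw [Matrix.mul_smul, h3, smul_zero]
  · rintro ⟨h1, h2, h3⟩
    have hZP : Z.PosSemidef := by
      have := psd_smul h2 (c := ν⁻¹) (by positivity)
      rwa [smul_smul, inv_mul_cancel₀ hν.ne', one_smul] at this
    refine ⟨h1, hZP, ?_⟩
    rw [Matrix.mul_smul] at h3
    rcases smul_eq_zero.mp h3 with h | h
    · exact absurd h hν.ne'
    · exact h
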